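/- arXiv:1807.00025 — 2 statements merged into one kernel-verified Lean document; each statement's English description precedes it below -/
import Mathlib

section
/- Let F ⊂ ℝ² be a lattice line segment with endpoints in ℤ², and let v : ℝ² → ℝ be an affine function with v integer-valued at both endpoints of F. Fix d ≥ 2. For n coprime to d, let N̄(n/d) be the number of lattice points P ∈ F ∩ ℤ² with v(P) ≡ n/d (mod ℤ). Then N̄(n/d) is independent of n ∈ (ℤ/dℤ)×. -/
/-- The natural embedding of the lattice `ℤ²` into `ℝ²`. -/
def toR (P : ℤ × ℤ) : ℝ × ℝ := ((P.1 : ℝ), (P.2 : ℝ))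



lemma not_dvd_coprime (d : ℕ) (hd : 2 ≤ d) (n : ℤ) (hn : IsCoprime n (d:ℤ)) :
    ¬ ((d:ℤ) ∣ n) := by
  intro h
  have := Int.isUnit_iff.mp (hn.isUnit_of_dvd' h dvd_rfl)
  omega

lemma solv_transfer (d g' : ℕ) (Δ m n : ℤ)
    (hmn : IsCoprime n (d:ℤ)) (x : ZMod (d*g'))
    (hx : x * (Δ : ZMod (d*g')) = (n : ZMod (d*g')) * (g' : ZMod (d*g'))) :
    ∃ y : ZMod (d*g'), y * (Δ : ZMod (d*g')) = (m : ZMod (d*g')) * (g' : ZMod (d*g')) := by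
  obtain ⟨a, b, hab⟩ := hmn
  refine ⟨(m*a : ℤ) * x, ?_⟩
  have key : ((m*a*n*(g':ℤ) : ℤ) : ZMod (d*g')) = ((m*(g':ℤ) : ℤ) : ZMod (d*g')) := by
    rw [ZMod.intCast_eq_intCast_iff]
    refine (Int.modEq_iff_dvd.mpr ⟨-(m*b), ?_⟩).symm
    push_cast
    linear_combination m * (g':ℤ) * hab
  push_cast at key hx ⊢
  rw [mul_assoc, hx]
  linear_combination key

lemma card_sols (d g' : ℕ) (Δ m n : ℤ) [NeZero (d*g')]
    (hm : IsCoprime m (d:ℤ)) (hn : IsCoprime n (d:ℤ)) :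
    (Finset.univ.filter fun x : ZMod (d*g') =>
        x * (Δ : ZMod (d*g')) = (m : ZMod (d*g')) * (g' : ZMod (d*g'))).card
    = (Finset.univ.filter fun x : ZMod (d*g') =>
        x * (Δ : ZMod (d*g')) = (n : ZMod (d*g')) * (g' : ZMod (d*g'))).card := by
  by_cases hA : ∃ x : ZMod (d*g'),
      x * (Δ : ZMod (d*g')) = (m : ZMod (d*g')) * (g' : ZMod (d*g'))
  · obtain ⟨x₀, hx₀⟩ := hA
    obtain ⟨y₀, hy₀⟩ := solv_transfer d g' Δ n m hm x₀ hx₀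
    apply Finset.card_nbij' (fun x => x - x₀ + y₀) (fun y => y - y₀ + x₀)
    · intro x hx
      simp only [Finset.mem_coe, Finset.mem_filter, Finset.mem_univ, true_and] at hx ⊢
      rw [add_mul, sub_mul, hx, hx₀, hy₀]; ring
    · intro y hy
      simp only [Finset.mem_coe, Finset.mem_filter, Finset.mem_univ, true_and] at hy ⊢
      rw [add_mul, sub_mul, hy, hx₀, hy₀]; ring
    · intro x _; ring
    · intro y _; ring
  · have hB : ¬ ∃ y : ZMod (d*g'),
        y * (Δ : ZMod (d*g')) = (n : ZMod (d*g')) * (g' : ZMod (d*g')) := by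
      intro ⟨y, hy⟩
      exact hA (solv_transfer d g' Δ m n hn y hy)
    push_neg at hA hB
    rw [Finset.filter_false_of_mem (fun x _ => hA x), Finset.filter_false_of_mem (fun x _ => hB x)]

lemma cardJ_eq_sols (d g' : ℕ) (hd : 2 ≤ d) (hg' : 0 < g') (Δ n : ℤ)
    [NeZero (d*g')] (hn : IsCoprime n (d:ℤ)) :
    ((Finset.Icc (0:ℤ) ((d*g' : ℕ):ℤ)).filter fun j => (((d*g':ℕ):ℤ)) ∣ (j*Δ - n*(g':ℤ))).card
    = (Finset.univ.filter fun x : ZMod (d*g') =>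
        x * (Δ : ZMod (d*g')) = (n : ZMod (d*g')) * (g' : ZMod (d*g'))).card := by
  have hg'z : (g':ℤ) ≠ 0 := by exact_mod_cast hg'.ne'
  have hkey : ∀ j : ℤ, (((d*g':ℕ):ℤ)) ∣ (j*Δ - n*(g':ℤ)) → ¬ (((d*g':ℕ):ℤ) ∣ j) := by
    intro j hj hdvd
    have h1 : ((d:ℤ)*(g':ℤ)) ∣ n*(g':ℤ) := by
      have : (((d*g':ℕ):ℤ)) ∣ (j*Δ - (j*Δ - n*(g':ℤ))) := (Dvd.dvd.mul_right hdvd Δ).sub hj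
      push_cast at this
      simpa using this
    exact not_dvd_coprime d hd n hn ((mul_dvd_mul_iff_right hg'z).mp h1)
  have hcong : ∀ j : ℤ, ((((d*g':ℕ):ℤ)) ∣ (j*Δ - n*(g':ℤ))) ↔
      ((j : ZMod (d*g')) * (Δ : ZMod (d*g')) = (n : ZMod (d*g')) * (g' : ZMod (d*g'))) := by
    intro j
    constructor
    · intro h
      have h2 : ((j*Δ : ℤ) : ZMod (d*g')) = ((n*(g':ℤ) : ℤ) : ZMod (d*g')) := by
        rw [ZMod.intCast_eq_intCast_iff, Int.modEq_iff_dvd]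
        exact dvd_sub_comm.mp h
      push_cast at h2 ⊢; linear_combination h2
    · intro h
      have h2 : ((j*Δ : ℤ) : ZMod (d*g')) = ((n*(g':ℤ) : ℤ) : ZMod (d*g')) := by
        push_cast; linear_combination h
      rw [ZMod.intCast_eq_intCast_iff, Int.modEq_iff_dvd] at h2
      exact dvd_sub_comm.mp h2
  have hval : ∀ x : ZMod (d*g'), (((x.val : ℤ)) : ZMod (d*g')) = x := by
    intro x
    push_cast
    simp [ZMod.natCast_val, ZMod.cast_id]
  refine Finset.card_bij' (fun j _ => ((j : ZMod (d*g')))) (fun x _ => ((x.val : ℤ))) ?_ ?_ ?_ ?_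
  · intro j hj
    simp only [Finset.mem_filter, Finset.mem_Icc] at hj
    simp only [Finset.mem_filter, Finset.mem_univ, true_and]
    exact (hcong j).mp hj.2
  · intro x hx
    simp only [Finset.mem_filter, Finset.mem_univ, true_and] at hx
    simp only [Finset.mem_filter, Finset.mem_Icc]
    have hlt : x.val < d*g' := ZMod.val_lt x
    refine ⟨⟨by positivity, by exact_mod_cast hlt.le⟩, ?_⟩
    rw [hcong, hval]
    exact hx
  · intro j hj
    simp only [Finset.mem_filter, Finset.mem_Icc] at hj
    have hne : j ≠ ((d*g':ℕ):ℤ) := by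
      intro he
      exact hkey j hj.2 (he ▸ dvd_rfl)
    have h0 : 0 ≤ j := hj.1.1
    have hlt : j < ((d*g':ℕ):ℤ) := lt_of_le_of_ne hj.1.2 hne
    show (((j : ZMod (d*g')).val : ℤ)) = j
    rw [ZMod.val_intCast]
    exact Int.emod_eq_of_lt h0 hlt
  · intro x _
    show ((((x.val : ℤ)) : ZMod (d*g'))) = x
    exact hval x

lemma cardJ (d g : ℕ) (hd : 2 ≤ d) (hg : 0 < g) (Δ m n : ℤ)
    (hm : IsCoprime m (d:ℤ)) (hn : IsCoprime n (d:ℤ)) :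
    ((Finset.Icc (0:ℤ) (g:ℤ)).filter fun j => ((g:ℤ)*(d:ℤ)) ∣ (j*Δ*(d:ℤ) - m*(g:ℤ))).card
    = ((Finset.Icc (0:ℤ) (g:ℤ)).filter fun j => ((g:ℤ)*(d:ℤ)) ∣ (j*Δ*(d:ℤ) - n*(g:ℤ))).card := by
  by_cases hdg : d ∣ g
  · obtain ⟨g', rfl⟩ := hdg
    have hg' : 0 < g' := Nat.pos_of_ne_zero (fun h => by simp [h] at hg)
    haveI : NeZero (d*g') := ⟨by positivity⟩
    have hd0 : (d:ℤ) ≠ 0 := by positivity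
    have hcond : ∀ nn j : ℤ, (((d*g':ℕ):ℤ)*(d:ℤ)) ∣ (j*Δ*(d:ℤ) - nn*((d*g':ℕ):ℤ)) ↔
        (((d*g':ℕ):ℤ)) ∣ (j*Δ - nn*(g':ℤ)) := by
      intro nn j
      rw [show ((((d*g':ℕ):ℤ))*(d:ℤ)) = (d:ℤ)*((d*g':ℕ):ℤ) by ring,
        show (j*Δ*(d:ℤ) - nn*((d*g':ℕ):ℤ)) = (d:ℤ)*(j*Δ - nn*(g':ℤ)) by push_cast; ring]
      exact mul_dvd_mul_iff_left hd0
    simp only [hcond]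
    rw [cardJ_eq_sols d g' hd hg' Δ m hm, cardJ_eq_sols d g' hd hg' Δ n hn]
    exact card_sols d g' Δ m n hm hn
  · have hempty : ∀ nn : ℤ, IsCoprime nn (d:ℤ) →
        ((Finset.Icc (0:ℤ) (g:ℤ)).filter fun j => ((g:ℤ)*(d:ℤ)) ∣ (j*Δ*(d:ℤ) - nn*(g:ℤ)))
          = ∅ := by
      intro nn hnn
      rw [Finset.filter_eq_empty_iff]
      intro j _ hdvd
      have h1 : (d:ℤ) ∣ nn*(g:ℤ) := by
        have h2 : (d:ℤ) ∣ (j*Δ*(d:ℤ) - (j*Δ*(d:ℤ) - nn*(g:ℤ))) :=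
          (Dvd.dvd.mul_left dvd_rfl (j*Δ)).sub ((dvd_mul_left (d:ℤ) (g:ℤ)).trans hdvd)
        simpa using h2
      have h3 : (d:ℤ) ∣ (g:ℤ) := (hnn.symm).dvd_of_dvd_mul_left h1
      exact hdg (by exact_mod_cast h3)
    rw [hempty m hm, hempty n hn]

/-- Let `F` be a lattice segment with endpoints `P₀ ≠ P₁` in `ℤ²`, and
`v` an affine function, integer-valued at both endpoints. For `d ≥ 2` and `n` coprime
to `d`, the number `N̄(n/d)` of lattice points `P ∈ F` with `v(P) ≡ n/d (mod ℤ)` is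
independent of `n`. -/
theorem stmt2 (P₀ P₁ : ℤ × ℤ) (hne : P₀ ≠ P₁)
    (v : ℝ × ℝ → ℝ) (hv : ∃ a b c : ℝ, ∀ p : ℝ × ℝ, v p = a * p.1 + b * p.2 + c)
    (h₀ : ∃ n : ℤ, v (toR P₀) = (n : ℝ)) (h₁ : ∃ n : ℤ, v (toR P₁) = (n : ℝ))
    (d : ℕ) (hd : 2 ≤ d)
    (N : ℤ → ℕ)
    (hN : ∀ n : ℤ, N n =
      {P : ℤ × ℤ | toR P ∈ segment ℝ (toR P₀) (toR P₁) ∧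
        ∃ k : ℤ, v (toR P) - (n : ℝ) / (d : ℝ) = (k : ℝ)}.ncard) :
    ∀ m n : ℤ, Int.gcd m (d : ℤ) = 1 → Int.gcd n (d : ℤ) = 1 → N m = N n := by
  intro m n hm hn
  obtain ⟨a, b, c, hvabc⟩ := hv
  obtain ⟨n₀, hn₀⟩ := h₀
  obtain ⟨n₁, hn₁⟩ := h₁
  set Dx : ℤ := P₁.1 - P₀.1 with hDx
  set Dy : ℤ := P₁.2 - P₀.2 with hDy
  have hD0 : Dx ≠ 0 ∨ Dy ≠ 0 := by
    by_contra h
    push_neg at h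
    exact hne (Prod.ext (by omega) (by omega)).symm
  set g : ℕ := Int.gcd Dx Dy with hgdef
  have hg : 0 < g := Int.gcd_pos_iff.mpr hD0
  obtain ⟨ex, hex⟩ : (g:ℤ) ∣ Dx := Int.gcd_dvd_left Dx Dy
  obtain ⟨ey, hey⟩ : (g:ℤ) ∣ Dy := Int.gcd_dvd_right Dx Dy
  have hgR : (0:ℝ) < (g:ℝ) := by exact_mod_cast hg
  have hdR : (0:ℝ) < (d:ℝ) := by positivity
  have hd0 : (d:ℝ) ≠ 0 := hdR.ne'
  have hg0 : (g:ℝ) ≠ 0 := hgR.ne'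
  set Δ : ℤ := n₁ - n₀ with hΔdef
  have DxR : (Dx:ℝ) = (P₁.1:ℝ) - (P₀.1:ℝ) := by rw [hDx]; push_cast; ring
  have DyR : (Dy:ℝ) = (P₁.2:ℝ) - (P₀.2:ℝ) := by rw [hDy]; push_cast; ring
  have hexR : (Dx:ℝ) = (g:ℝ) * (ex:ℝ) := by exact_mod_cast congrArg (Int.cast : ℤ → ℝ) hex
  have heyR : (Dy:ℝ) = (g:ℝ) * (ey:ℝ) := by exact_mod_cast congrArg (Int.cast : ℤ → ℝ) hey
  have e0 : (n₀:ℝ) = a * (P₀.1:ℝ) + b * (P₀.2:ℝ) + c := by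
    rw [← hn₀, hvabc]; simp [toR]
  have e1 : (n₁:ℝ) = a * (P₁.1:ℝ) + b * (P₁.2:ℝ) + c := by
    rw [← hn₁, hvabc]; simp [toR]
  have hΔ : a * (Dx:ℝ) + b * (Dy:ℝ) = (Δ:ℝ) := by
    rw [DxR, DyR, hΔdef]
    push_cast
    linear_combination e0 - e1
  set F : ℤ → ℤ × ℤ := fun j => (P₀.1 + j*ex, P₀.2 + j*ey) with hF
  have hinjF : Function.Injective F := by
    intro j1 j2 h
    rw [hF, Prod.mk.injEq] at h
    have hxy : ex ≠ 0 ∨ ey ≠ 0 := by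
      rcases hD0 with h' | h'
      · exact Or.inl (fun he => h' (by rw [hex, he, mul_zero]))
      · exact Or.inr (fun he => h' (by rw [hey, he, mul_zero]))
    rcases hxy with h' | h'
    · have : j1 * ex = j2 * ex := by omega
      exact mul_right_cancel₀ h' this
    · have : j1 * ey = j2 * ey := by omega
      exact mul_right_cancel₀ h' this
  have hSet : ∀ nn : ℤ,
      {P : ℤ × ℤ | toR P ∈ segment ℝ (toR P₀) (toR P₁) ∧
        ∃ k : ℤ, v (toR P) - (nn : ℝ) / (d : ℝ) = (k : ℝ)}
      = ↑(((Finset.Icc (0:ℤ) (g:ℤ)).filter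
            fun j => ((g:ℤ)*(d:ℤ)) ∣ (j*Δ*(d:ℤ) - nn*(g:ℤ))).image F) := by
    intro nn
    ext P
    simp only [Set.mem_setOf_eq, Finset.coe_image, Set.mem_image, Finset.mem_coe,
      Finset.mem_filter, Finset.mem_Icc]
    constructor
    · rintro ⟨hseg, k, hk⟩
      rw [segment_eq_image'] at hseg
      obtain ⟨t, ht, hPt⟩ := hseg
      simp only [Set.mem_Icc] at ht
      have h1 : (P.1:ℝ) = (P₀.1:ℝ) + t * (Dx:ℝ) := by
        have := congrArg Prod.fst hPt
        simp only [toR, Prod.fst_add, Prod.smul_fst, Prod.fst_sub, smul_eq_mul] at this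
        rw [DxR]; linarith [this]
      have h2 : (P.2:ℝ) = (P₀.2:ℝ) + t * (Dy:ℝ) := by
        have := congrArg Prod.snd hPt
        simp only [toR, Prod.snd_add, Prod.smul_snd, Prod.snd_sub, smul_eq_mul] at this
        rw [DyR]; linarith [this]
      have hbez : (g:ℤ) = Dx * Int.gcdA Dx Dy + Dy * Int.gcdB Dx Dy := Int.gcd_eq_gcd_ab Dx Dy
      set u := Int.gcdA Dx Dy with hu
      set w := Int.gcdB Dx Dy with hw
      set j : ℤ := u*(P.1 - P₀.1) + w*(P.2 - P₀.2) with hj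
      have hbR : ((g:ℕ):ℝ) = (Dx:ℝ)*(u:ℝ) + (Dy:ℝ)*(w:ℝ) := by exact_mod_cast congrArg (Int.cast : ℤ → ℝ) hbez
      have htg : t * (g:ℝ) = (j:ℝ) := by
        rw [hj]
        push_cast
        linear_combination -(u:ℝ)*h1 - (w:ℝ)*h2 + t*hbR
      have hj0 : 0 ≤ j := by
        have : (0:ℝ) ≤ (j:ℝ) := htg ▸ mul_nonneg ht.1 hgR.le
        exact_mod_cast this
      have hjg : j ≤ (g:ℤ) := by
        have : (j:ℝ) ≤ (g:ℝ) := by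
          rw [← htg]
          nlinarith [ht.2, hgR]
        exact_mod_cast this
      have hP1 : P.1 = P₀.1 + j*ex := by
        have : (P.1:ℝ) = ((P₀.1 + j*ex : ℤ):ℝ) := by
          push_cast
          linear_combination h1 + t*hexR + (ex:ℝ)*htg
        exact_mod_cast this
      have hP2 : P.2 = P₀.2 + j*ey := by
        have : (P.2:ℝ) = ((P₀.2 + j*ey : ℤ):ℝ) := by
          push_cast
          linear_combination h2 + t*heyR + (ey:ℝ)*htg
        exact_mod_cast this
      have hvP : v (toR P) = (n₀:ℝ) + t*(Δ:ℝ) := by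
        rw [hvabc]
        simp only [toR]
        linear_combination a*h1 + b*h2 - e0 + t*hΔ
      refine ⟨j, ⟨⟨hj0, hjg⟩, ⟨k - n₀, ?_⟩⟩, ?_⟩
      · have hk2 : v (toR P) * (d:ℝ) - (nn:ℝ) = (k:ℝ) * (d:ℝ) := by
          field_simp at hk
          linarith [hk]
        have hreal : ((j*Δ*(d:ℤ) - nn*(g:ℤ) : ℤ):ℝ) = (((g:ℤ)*(d:ℤ)*(k - n₀) : ℤ):ℝ) := by
          push_cast
          linear_combination (g:ℝ)*hk2 - (g:ℝ)*(d:ℝ)*hvP - (Δ:ℝ)*(d:ℝ)*htg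
        exact_mod_cast hreal
      · rw [hF, Prod.mk.injEq]
        exact ⟨hP1.symm, hP2.symm⟩
    · rintro ⟨j, hjmem, rfl⟩
      obtain ⟨⟨hj0, hjg⟩, hdvd⟩ := hjmem
      have hj0R : (0:ℝ) ≤ (j:ℝ) := by exact_mod_cast hj0
      have hjgR : (j:ℝ) ≤ (g:ℝ) := by exact_mod_cast hjg
      constructor
      · rw [segment_eq_image']
        refine ⟨(j:ℝ)/(g:ℝ), ⟨by positivity, by rw [div_le_one hgR]; exact hjgR⟩, ?_⟩
        have hfst : (P₀.1:ℝ) + (j:ℝ)/(g:ℝ) * ((P₁.1:ℝ) - (P₀.1:ℝ)) = ((P₀.1 + j*ex : ℤ):ℝ) := by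
          rw [← DxR, hexR]
          push_cast
          field_simp
        have hsnd : (P₀.2:ℝ) + (j:ℝ)/(g:ℝ) * ((P₁.2:ℝ) - (P₀.2:ℝ)) = ((P₀.2 + j*ey : ℤ):ℝ) := by
          rw [← DyR, heyR]
          push_cast
          field_simp
        apply Prod.ext
        · simpa [toR, hF] using hfst
        · simpa [toR, hF] using hsnd
      · obtain ⟨k', hk'⟩ := hdvd
        refine ⟨n₀ + k', ?_⟩
        have hk'R : (j:ℝ)*(Δ:ℝ)*(d:ℝ) - (nn:ℝ)*(g:ℝ) = (g:ℝ)*(d:ℝ)*(k':ℝ) := by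
          exact_mod_cast congrArg (Int.cast : ℤ → ℝ) hk'
        have hvF : v (toR (F j)) * (g:ℝ) = (n₀:ℝ)*(g:ℝ) + (j:ℝ)*(Δ:ℝ) := by
          rw [hvabc]
          simp only [hF, toR]
          push_cast
          linear_combination -(g:ℝ)*e0 + (j:ℝ)*hΔ - (j:ℝ)*a*hexR - (j:ℝ)*b*heyR
        apply mul_left_cancel₀ (show ((g:ℝ)*(d:ℝ)) ≠ 0 by positivity)
        have hdiv : ((g:ℝ)*(d:ℝ))*((nn:ℝ)/(d:ℝ)) = (g:ℝ)*(nn:ℝ) := by field_simp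
        push_cast
        linear_combination (d:ℝ)*hvF + hk'R - hdiv
  have hcm : IsCoprime m (d:ℤ) := Int.isCoprime_iff_gcd_eq_one.mpr hm
  have hcn : IsCoprime n (d:ℤ) := Int.isCoprime_iff_gcd_eq_one.mpr hn
  have hNc : ∀ nn : ℤ, N nn = ((Finset.Icc (0:ℤ) (g:ℤ)).filter
      fun j => ((g:ℤ)*(d:ℤ)) ∣ (j*Δ*(d:ℤ) - nn*(g:ℤ))).card := by
    intro nn
    rw [hN nn, hSet nn, Set.ncard_coe_finset, Finset.card_image_of_injective _ hinjF]
  rw [hNc m, hNc n]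
  exact cardJ d g hd hg Δ m n hcm hcn
end

section
/- Given rationals s₁ > s₂, there exist r ≥ 0 and fractions nᵢ/dᵢ (i = 0,…,r+1) with dᵢ > 0, such that s₁ = n₀/d₀ > n₁/d₁ > … > n_r/d_r > n_{r+1}/d_{r+1} = s₂ and nᵢ d_{i+1} − n_{i+1} dᵢ = 1 for all 0 ≤ i ≤ r. -/
private lemma stmt8_aux (D : ℕ) : ∀ (a b c e : ℤ), 0 < b → 0 < e →
    IsCoprime a b → IsCoprime c e → a * e - c * b = (D : ℤ) → 0 < D →
    ∃ (r : ℕ) (n d : ℕ → ℤ),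
      (∀ i ≤ r + 1, 0 < d i) ∧ n 0 = a ∧ d 0 = b ∧ n (r + 1) = c ∧ d (r + 1) = e ∧
      (∀ i ≤ r, n i * d (i + 1) - n (i + 1) * d i = 1) := by
  induction D using Nat.strong_induction_on with
  | _ D IH =>
  intro a b c e hb he hab hce hD hDpos
  by_cases hD1 : D = 1
  · subst hD1
    refine ⟨0, (fun i => if i = 0 then a else c), (fun i => if i = 0 then b else e),
      ?_, by simp, by simp, by simp, by simp, ?_⟩
    · intro i _
      by_cases h : i = 0 <;> simp [h, hb, he]
    · intro i hi
      interval_cases i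
      simpa using hD
  · have hD2 : (2 : ℤ) ≤ (D : ℤ) := by exact_mod_cast (by omega : 2 ≤ D)
    obtain ⟨u, v, huv⟩ := hab
    set y₀ : ℤ := u with hy₀
    set x₀ : ℤ := -v with hx₀
    have hbez : a * y₀ - x₀ * b = 1 := by rw [hy₀, hx₀]; linear_combination huv
    set E : ℤ := x₀ * e - c * y₀ with hEdef
    -- least t with 0 < y₀ + t*b and 0 ≤ E + t*D
    have hbdd : ∃ lb : ℤ, ∀ z : ℤ, (0 < y₀ + z * b ∧ 0 ≤ E + z * (D : ℤ)) → lb ≤ z := by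
      refine ⟨-|y₀|, fun z hz => ?_⟩
      by_contra hzc
      push_neg at hzc
      have hz0 : z < 0 := by have := abs_nonneg y₀; omega
      have h1 : z * b ≤ z * 1 := mul_le_mul_of_nonpos_left hb hz0.le
      have h2 : -|y₀| ≤ y₀ := neg_abs_le y₀
      have h3 : y₀ ≤ |y₀| := le_abs_self y₀
      have := hz.1
      omega
    have hinh : ∃ z : ℤ, 0 < y₀ + z * b ∧ 0 ≤ E + z * (D : ℤ) := by
      refine ⟨|y₀| + |E| + 1, ?_, ?_⟩
      · have h1 : (|y₀| + |E| + 1) * 1 ≤ (|y₀| + |E| + 1) * b :=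
          mul_le_mul_of_nonneg_left hb (by positivity)
        have h2 : -|y₀| ≤ y₀ := neg_abs_le y₀
        have := abs_nonneg E
        omega
      · have h1 : (|y₀| + |E| + 1) * 1 ≤ (|y₀| + |E| + 1) * (D : ℤ) :=
          mul_le_mul_of_nonneg_left (by omega) (by positivity)
        have h2 : -|E| ≤ E := neg_abs_le E
        have := abs_nonneg y₀
        omega
    obtain ⟨t, ⟨hty, htE⟩, hleast⟩ := Int.exists_least_of_bdd hbdd hinh
    set x : ℤ := x₀ + t * a with hxdef
    set y : ℤ := y₀ + t * b with hydef
    have hy : 0 < y := hty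
    have hxy : a * y - x * b = 1 := by rw [hxdef, hydef]; linear_combination hbez
    have hE : x * e - c * y = E + t * (D : ℤ) := by
      rw [hxdef, hydef, hEdef]; linear_combination t * hD
    have hE0 : 0 ≤ x * e - c * y := by rw [hE]; exact htE
    have key : b * (x * e - c * y) = y * (D : ℤ) - e := by linear_combination y * hD - e * hxy
    -- it is nonzero
    have hne : x * e - c * y ≠ 0 := by
      intro h0
      have he' : e = y * (D : ℤ) := by rw [h0] at key; linarith
      have hyc : y * (x * (D : ℤ) - c) = 0 := by linear_combination h0 - x * he'
      have hc' : c = x * (D : ℤ) := by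
        rcases mul_eq_zero.mp hyc with h | h
        · omega
        · linarith
      have hu : IsUnit ((D : ℤ)) :=
        hce.isUnit_of_dvd' ⟨x, by linarith [hc']⟩ ⟨y, by linarith [he']⟩
      rcases Int.isUnit_iff.mp hu with h | h <;> omega
    -- it is < D
    have hlt : x * e - c * y < (D : ℤ) := by
      have hnot : ¬(0 < y₀ + (t - 1) * b ∧ 0 ≤ E + (t - 1) * (D : ℤ)) := by
        intro hp
        have := hleast (t - 1) hp
        omega
      push_neg at hnot
      by_cases hcase : 0 < y₀ + (t - 1) * b
      · have h2 := hnot hcase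
        have : E + (t - 1) * (D : ℤ) = (x * e - c * y) - (D : ℤ) := by
          rw [hE]; ring
        omega
      · push_neg at hcase
        have hyb : y ≤ b := by
          have : y₀ + (t - 1) * b = y - b := by rw [hydef]; ring
          omega
        have h1 : y * (D : ℤ) ≤ b * (D : ℤ) :=
          mul_le_mul_of_nonneg_right hyb (by positivity)
        have h2 : b * (x * e - c * y) < b * (D : ℤ) := by omega
        exact lt_of_mul_lt_mul_left h2 hb.le
    set D₂ : ℕ := (x * e - c * y).toNat with hD₂def
    have hD₂cast : (D₂ : ℤ) = x * e - c * y := Int.toNat_of_nonneg hE0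
    have hD₂lt : D₂ < D := by
      have : (D₂ : ℤ) < (D : ℤ) := by omega
      exact_mod_cast this
    have hD₂pos : 0 < D₂ := by
      have : (0 : ℤ) < (D₂ : ℤ) := by omega
      exact_mod_cast this
    have hxyCop : IsCoprime x y := ⟨-b, a, by linarith [hxy]⟩
    obtain ⟨r, n, d, hpos, hn0, hd0, hnr, hdr, hdet⟩ :=
      IH D₂ hD₂lt x y c e hy he hxyCop hce hD₂cast.symm hD₂pos
    refine ⟨r + 1, (fun i => match i with | 0 => a | (j+1) => n j),
      (fun i => match i with | 0 => b | (j+1) => d j), ?_, rfl, rfl, ?_, ?_, ?_⟩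
    · intro i hi
      match i with
      | 0 => exact hb
      | (j+1) => exact hpos j (by omega)
    · show n (r + 1) = c
      exact hnr
    · show d (r + 1) = e
      exact hdr
    · intro i hi
      match i with
      | 0 =>
        show a * d 0 - n 0 * b = 1
        rw [hd0, hn0]; exact hxy
      | (j+1) => exact hdet j (by omega)

/-- Given rationals `s₁ > s₂`, there is a chain of fractions
`s₁ = n₀/d₀ > n₁/d₁ > … > n_{r+1}/d_{r+1} = s₂` with positive denominators and
consecutive determinants `nᵢ d_{i+1} − n_{i+1} dᵢ = 1`. -/
theorem stmt8 (s₁ s₂ : ℚ) (h : s₂ < s₁) :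
    ∃ (r : ℕ) (n d : ℕ → ℤ),
      (∀ i ≤ r + 1, 0 < d i) ∧
      ((n 0 : ℚ) / (d 0 : ℚ) = s₁) ∧
      ((n (r + 1) : ℚ) / (d (r + 1) : ℚ) = s₂) ∧
      (∀ i ≤ r, (n (i + 1) : ℚ) / (d (i + 1) : ℚ) < (n i : ℚ) / (d i : ℚ)) ∧
      (∀ i ≤ r, n i * d (i + 1) - n (i + 1) * d i = 1) := by
  have hb : (0 : ℤ) < (s₁.den : ℤ) := by exact_mod_cast s₁.pos
  have he : (0 : ℤ) < (s₂.den : ℤ) := by exact_mod_cast s₂.pos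
  have hc1 : IsCoprime (s₁.num) ((s₁.den : ℤ)) := by
    rw [Int.isCoprime_iff_gcd_eq_one]
    exact s₁.reduced
  have hc2 : IsCoprime (s₂.num) ((s₂.den : ℤ)) := by
    rw [Int.isCoprime_iff_gcd_eq_one]
    exact s₂.reduced
  have hnum : s₂.num * (s₁.den : ℤ) < s₁.num * (s₂.den : ℤ) := by
    have h1 : ((s₂.num : ℚ)) / (s₂.den : ℚ) < ((s₁.num : ℚ)) / (s₁.den : ℚ) := by
      rw [Rat.num_div_den, Rat.num_div_den]; exact h
    rw [div_lt_div_iff₀ (by exact_mod_cast s₂.pos) (by exact_mod_cast s₁.pos)] at h1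
    exact_mod_cast h1
  set Dz : ℤ := s₁.num * (s₂.den : ℤ) - s₂.num * (s₁.den : ℤ) with hDz
  have hDz0 : 0 < Dz := by omega
  have hDcast : s₁.num * (s₂.den : ℤ) - s₂.num * (s₁.den : ℤ) = ((Dz.toNat : ℕ) : ℤ) := by
    rw [Int.toNat_of_nonneg hDz0.le]
  have hDpos : 0 < Dz.toNat := by omega
  obtain ⟨r, n, d, hpos, hn0, hd0, hnr, hdr, hdet⟩ :=
    stmt8_aux Dz.toNat s₁.num (s₁.den : ℤ) s₂.num (s₂.den : ℤ) hb he hc1 hc2 hDcast hDpos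
  refine ⟨r, n, d, hpos, ?_, ?_, ?_, hdet⟩
  · rw [hn0, hd0]
    push_cast
    exact Rat.num_div_den s₁
  · rw [hnr, hdr]
    push_cast
    exact Rat.num_div_den s₂
  · intro i hi
    have h1 := hdet i hi
    have p1 := hpos i (by omega)
    have p2 := hpos (i + 1) (by omega)
    rw [div_lt_div_iff₀ (by exact_mod_cast p2) (by exact_mod_cast p1)]
    have : n (i + 1) * d i < n i * d (i + 1) := by omega
    exact_mod_cast this
end
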